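/- Let q be a prime power and let k, n, d be positive integers with d ≤ k and 2k ≤ n. For each j = 0, …, ⌊(n−k)/d⌋ with n − jd − k ≥ d, let C_j ⊆ F_q^{k×(n−k−jd)} be an MRD code with minimum rank distance d, and for j with n − jd − k < d let C_j consist of a single matrix; let 𝒞_j = { row space of [0_{k×jd} | I_k | M] : M ∈ C_j }. Then the union 𝒞 = ⋃_{j=0}^{⌊(n−k)/d⌋} 𝒞_j is a constant dimension code in G_q(k,n) with minimum injection distance d. -/
import Mathlib


open Matrix Module

/-- The row space of a matrix, i.e. the span of its rows. -/
noncomputable def rowSpace (F : Type) [Field F] {k n : ℕ}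
    (M : Matrix (Fin k) (Fin n) F) : Submodule F (Fin n → F) :=
  Submodule.span F (Set.range M)

/-- The block matrix `[0_{k×l} | I_k | M]` of size `k × n`,
where `M` has size `k × (n - k - l)`. -/
def paddedLift (F : Type) [Field F] (k n l : ℕ)
    (M : Matrix (Fin k) (Fin (n - k - l)) F) : Matrix (Fin k) (Fin n) F :=
  fun i j =>
    if (j : ℕ) < l then 0
    else if h : (j : ℕ) < l + k then (if (j : ℕ) = l + (i : ℕ) then 1 else 0)
    else M i ⟨(j : ℕ) - (l + k), by have := j.isLt; omega⟩

/-- A rank-metric code `C` has minimum rank distance `d`. -/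
def HasMinRankDist (F : Type) [Field F] {m n : ℕ}
    (C : Set (Matrix (Fin m) (Fin n) F)) (d : ℕ) : Prop :=
  (∀ A ∈ C, ∀ B ∈ C, A ≠ B → d ≤ (A - B).rank) ∧
  ∃ A ∈ C, ∃ B ∈ C, A ≠ B ∧ (A - B).rank = d

/-- A rank-metric code is MRD if it has minimum rank distance `d` and attains
the Singleton-like bound. -/
def IsMRD (F : Type) [Field F] [Fintype F] {m n : ℕ}
    (C : Set (Matrix (Fin m) (Fin n) F)) (d : ℕ) : Prop :=
  HasMinRankDist F C d ∧
  Nat.card C = (Fintype.card F) ^ (max n m * (min n m - d + 1))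

/-- A constant dimension code `𝒞` of dimension `k` has minimum injection distance `d`. -/
def HasMinInjDist (F : Type) [Field F] {n : ℕ} (k : ℕ)
    (𝒞 : Set (Submodule F (Fin n → F))) (d : ℕ) : Prop :=
  (∀ U ∈ 𝒞, ∀ V ∈ 𝒞, U ≠ V → d ≤ k - finrank F ↥(U ⊓ V)) ∧
  ∃ U ∈ 𝒞, ∃ V ∈ 𝒞, U ≠ V ∧ k - finrank F ↥(U ⊓ V) = d

section Helpers

variable {F : Type} [Field F] {k n : ℕ}

lemma vecMul_paddedLift {l : ℕ}
    (M : Matrix (Fin k) (Fin (n - k - l)) F) (x : Fin k → F) (j : Fin n) :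
    (x ᵥ* paddedLift F k n l M) j =
      if h1 : (j : ℕ) < l then 0
      else if h2 : (j : ℕ) < l + k then x ⟨(j : ℕ) - l, by omega⟩
      else (x ᵥ* M) ⟨(j : ℕ) - (l + k), by have := j.isLt; omega⟩ := by
  simp only [vecMul, dotProduct, paddedLift]
  split_ifs with h1 h2
  · simp
  · rw [Finset.sum_eq_single (⟨(j : ℕ) - l, by omega⟩ : Fin k)]
    · rw [if_pos (show (j:ℕ) = l + ((j:ℕ) - l) by omega), mul_one]
    · intro i _ hi
      rw [if_neg (fun h => hi (Fin.ext (show (i:ℕ) = (j:ℕ) - l by omega))), mul_zero]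
    · simp
  · simp only [vecMul, dotProduct]

lemma vecMul_paddedLift_zero {l : ℕ}
    (M : Matrix (Fin k) (Fin (n - k - l)) F) (x : Fin k → F) (j : Fin n)
    (hj : (j : ℕ) < l) :
    (x ᵥ* paddedLift F k n l M) j = 0 := by
  rw [vecMul_paddedLift, dif_pos hj]

lemma vecMul_paddedLift_id {l : ℕ}
    (M : Matrix (Fin k) (Fin (n - k - l)) F) (x : Fin k → F) (j : Fin n) (i : Fin k)
    (hj : (j : ℕ) = l + i) :
    (x ᵥ* paddedLift F k n l M) j = x i := by
  have hik := i.isLt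
  rw [vecMul_paddedLift, dif_neg (by omega), dif_pos (by omega)]
  congr 1
  exact Fin.ext (by simp; omega)

lemma vecMul_paddedLift_tail {l : ℕ}
    (M : Matrix (Fin k) (Fin (n - k - l)) F) (x : Fin k → F) (j : Fin n)
    (t : Fin (n - k - l)) (hj : (j : ℕ) = l + k + t) :
    (x ᵥ* paddedLift F k n l M) j = (x ᵥ* M) t := by
  have htk := t.isLt
  rw [vecMul_paddedLift, dif_neg (by omega), dif_neg (by omega)]
  congr 1
  exact Fin.ext (by simp; omega)

lemma rowSpace_eq_range (N : Matrix (Fin k) (Fin n) F) :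
    rowSpace F N = LinearMap.range N.vecMulLinear :=
  (_root_.range_vecMulLinear N).symm

lemma paddedLift_vecMul_injective {l : ℕ} (hln : l + k ≤ n)
    (M : Matrix (Fin k) (Fin (n - k - l)) F) :
    Function.Injective (paddedLift F k n l M).vecMulLinear := by
  intro x y h
  funext i
  have h2 := congrFun h ⟨l + i, by omega⟩
  simp only [vecMulLinear_apply] at h2
  exact (vecMul_paddedLift_id M x _ i rfl).symm.trans
    (h2.trans (vecMul_paddedLift_id M y _ i rfl))

lemma eq_of_mem_rowSpace {l : ℕ} (hln : l + k ≤ n)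
    {M : Matrix (Fin k) (Fin (n - k - l)) F} {v : Fin n → F}
    (hv : v ∈ rowSpace F (paddedLift F k n l M)) :
    (fun i : Fin k => v ⟨l + i, by omega⟩) ᵥ* paddedLift F k n l M = v := by
  rw [rowSpace_eq_range] at hv
  obtain ⟨x, rfl⟩ := hv
  simp only [vecMulLinear_apply]
  have hc : (fun i : Fin k => (x ᵥ* paddedLift F k n l M) ⟨l + i, by omega⟩) = x := by
    funext i; exact vecMul_paddedLift_id M x _ i rfl
  exact congrArg (fun c => c ᵥ* paddedLift F k n l M) hc

lemma finrank_rowSpace_paddedLift {l : ℕ} (hln : l + k ≤ n)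
    (M : Matrix (Fin k) (Fin (n - k - l)) F) :
    finrank F ↥(rowSpace F (paddedLift F k n l M)) = k := by
  rw [rowSpace_eq_range,
    LinearMap.finrank_range_of_inj (paddedLift_vecMul_injective hln M)]
  simp [Module.finrank_pi]

lemma finrank_inf_same {l : ℕ} (hln : l + k ≤ n)
    (A B : Matrix (Fin k) (Fin (n - k - l)) F) :
    finrank F ↥(rowSpace F (paddedLift F k n l A) ⊓ rowSpace F (paddedLift F k n l B))
      = k - (A - B).rank := by
  have key : rowSpace F (paddedLift F k n l A) ⊓ rowSpace F (paddedLift F k n l B)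
      = Submodule.map (paddedLift F k n l A).vecMulLinear
          (LinearMap.ker (A - B).vecMulLinear) := by
    apply le_antisymm
    · rintro v ⟨hvA, hvB⟩
      rw [rowSpace_eq_range] at hvA hvB
      obtain ⟨x, rfl⟩ := hvA
      obtain ⟨y, hy⟩ := hvB
      have hxy : y = x := by
        funext i
        have h2 := congrFun hy ⟨l + i, by omega⟩
        simp only [vecMulLinear_apply] at h2
        exact (vecMul_paddedLift_id _ y _ i rfl).symm.trans
          (h2.trans (vecMul_paddedLift_id _ x _ i rfl))
      subst hxy
      refine ⟨y, ?_, rfl⟩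
      simp only [SetLike.mem_coe, LinearMap.mem_ker, vecMulLinear_apply,
        Matrix.vecMul_sub, sub_eq_zero]
      funext t
      have h1 := congrFun hy ⟨l + k + (t : ℕ), by have := t.isLt; omega⟩
      simp only [vecMulLinear_apply] at h1
      exact (vecMul_paddedLift_tail A y _ t rfl).symm.trans
        ((h1.symm).trans (vecMul_paddedLift_tail B y _ t rfl))
    · rintro v ⟨x, hx, rfl⟩
      simp only [SetLike.mem_coe, LinearMap.mem_ker, vecMulLinear_apply,
        Matrix.vecMul_sub, sub_eq_zero] at hx
      constructor
      · rw [rowSpace_eq_range]; exact ⟨x, rfl⟩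
      · rw [rowSpace_eq_range]
        refine ⟨x, ?_⟩
        simp only [vecMulLinear_apply]
        funext j
        rw [vecMul_paddedLift, vecMul_paddedLift]
        split_ifs with h1 h2
        · rfl
        · rfl
        · rw [hx]
  rw [key, ← LinearEquiv.finrank_eq
    (Submodule.equivMapOfInjective _ (paddedLift_vecMul_injective hln A) _)]
  have h1 := LinearMap.finrank_range_add_finrank_ker (A - B).vecMulLinear
  have h2 : finrank F ↥(LinearMap.range (A - B).vecMulLinear) = (A - B).rank := by
    rw [← Matrix.mulVecLin_transpose]
    rw [show finrank F ↥(LinearMap.range (A - B)ᵀ.mulVecLin) = (A - B)ᵀ.rank from rfl]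
    rw [Matrix.rank_transpose]
  have h3 : (A - B).rank ≤ k :=
    le_trans (Matrix.rank_le_card_height _) (by simp)
  rw [h2] at h1
  simp only [Module.finrank_pi, Fintype.card_fin] at h1
  omega

lemma finrank_inf_le_of_lt {l l' d : ℕ} (hln : l + k ≤ n) (hl'n : l' + k ≤ n)
    (hll : l + d ≤ l') (hdk : d ≤ k)
    (A : Matrix (Fin k) (Fin (n - k - l)) F)
    (B : Matrix (Fin k) (Fin (n - k - l')) F) :
    finrank F ↥(rowSpace F (paddedLift F k n l A) ⊓ rowSpace F (paddedLift F k n l' B))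
      ≤ k - d := by
  set U := rowSpace F (paddedLift F k n l A) with hUdef
  set V := rowSpace F (paddedLift F k n l' B) with hVdef
  have hdk' : ∀ t : Fin d, (t : ℕ) < k := fun t => lt_of_lt_of_le t.isLt hdk
  set r : (Fin k → F) →ₗ[F] (Fin d → F) :=
    LinearMap.funLeft F F (fun t : Fin d => (⟨(t : ℕ), hdk' t⟩ : Fin k)) with hr
  set W := LinearMap.ker r with hWdef
  have hW : finrank F ↥W = k - d := by
    have hsurj : Function.Surjective r :=
      LinearMap.funLeft_surjective_of_injective F F _
        (fun a b hab => Fin.ext (Fin.mk.inj hab))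
    have h1 := LinearMap.finrank_range_add_finrank_ker r
    rw [LinearMap.range_eq_top.mpr hsurj, finrank_top] at h1
    simp only [Module.finrank_pi, Fintype.card_fin] at h1
    rw [hWdef]
    omega
  set e : (Fin n → F) →ₗ[F] (Fin k → F) :=
    LinearMap.funLeft F F (fun i : Fin k => (⟨l + i, by omega⟩ : Fin n)) with he
  have hmem : ∀ v ∈ U ⊓ V, e v ∈ W := by
    rintro v ⟨hvU, hvV⟩
    rw [hWdef, LinearMap.mem_ker]
    funext t
    rw [hVdef, rowSpace_eq_range] at hvV
    obtain ⟨y, hy⟩ := hvV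
    simp only [vecMulLinear_apply] at hy
    show v _ = 0
    have h1 := congrFun hy ⟨l + (t : ℕ), by have := t.isLt; omega⟩
    rw [vecMul_paddedLift_zero B y _
      (show l + (t : ℕ) < l' from by have := t.isLt; omega)] at h1
    exact h1.symm
  let f : ↥(U ⊓ V) →ₗ[F] ↥W :=
    (e.comp (U ⊓ V).subtype).codRestrict W (fun v => hmem v v.2)
  have hf : Function.Injective f := by
    rintro ⟨v₁, hv₁⟩ ⟨v₂, hv₂⟩ hfe
    have hev : e v₁ = e v₂ := congrArg Subtype.val hfe
    have h1 : (fun i : Fin k => v₁ ⟨l + i, by omega⟩) ᵥ* paddedLift F k n l A = v₁ :=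
      eq_of_mem_rowSpace hln (hUdef ▸ hv₁.1)
    have h2 : (fun i : Fin k => v₂ ⟨l + i, by omega⟩) ᵥ* paddedLift F k n l A = v₂ :=
      eq_of_mem_rowSpace hln (hUdef ▸ hv₂.1)
    have hcoef : (fun i : Fin k => v₁ ⟨l + i, by omega⟩)
        = (fun i : Fin k => v₂ ⟨l + i, by omega⟩) := by
      funext i
      exact congrFun hev i
    apply Subtype.ext
    show v₁ = v₂
    rw [← h1, ← h2, hcoef]
  calc finrank F ↥(U ⊓ V) ≤ finrank F ↥W :=
        LinearMap.finrank_le_finrank_of_injective hf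
    _ = k - d := hW

end Helpers

/-- **Multi-component lifted MRD codes have minimum injection distance `d`.**
For `j = 0, …, ⌊(n−k)/d⌋` let `C_j ⊆ F_q^{k×(n−k−jd)}` be an MRD code with
minimum rank distance `d` when `n − jd − k ≥ d`, and a single matrix otherwise.
Then the union of the lifted component codes
`𝒞_j = {rowspace [0_{k×jd} | I_k | M] : M ∈ C_j}` is a constant dimension code
in `G_q(k,n)` with minimum injection distance `d`. -/
theorem multi_component_min_distance
    (q : ℕ) (F : Type) [Field F] [Fintype F] (hq : Fintype.card F = q)
    (k n d : ℕ) (hk : 0 < k) (hn : 0 < n) (hd : 0 < d)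
    (hdk : d ≤ k) (h2k : 2 * k ≤ n)
    (C : ∀ j : ℕ, Set (Matrix (Fin k) (Fin (n - k - j * d)) F))
    (hC : ∀ j ≤ (n - k) / d,
      if d ≤ n - j * d - k then IsMRD F (C j) d else ∃ M, C j = {M}) :
    (∀ U ∈ {U : Submodule F (Fin n → F) | ∃ j ≤ (n - k) / d, ∃ M ∈ C j,
        U = rowSpace F (paddedLift F k n (j * d) M)}, finrank F ↥U = k) ∧
    HasMinInjDist F k
      {U : Submodule F (Fin n → F) | ∃ j ≤ (n - k) / d, ∃ M ∈ C j,
        U = rowSpace F (paddedLift F k n (j * d) M)} d := by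
  -- basic bound: if j ≤ (n-k)/d then j*d + k ≤ n
  have hbound : ∀ j ≤ (n - k) / d, j * d + k ≤ n := by
    intro j hj
    have h1 : j * d ≤ ((n - k) / d) * d := Nat.mul_le_mul_right d hj
    have h2 : ((n - k) / d) * d ≤ n - k := Nat.div_mul_le_self _ _
    omega
  refine ⟨?_, ?_, ?_⟩
  · -- constant dimension
    rintro U ⟨j, hj, M, hM, rfl⟩
    exact finrank_rowSpace_paddedLift (hbound j hj) M
  · -- min distance lower bound
    rintro U ⟨j₁, hj₁, A, hA, rfl⟩ V ⟨j₂, hj₂, B, hB, rfl⟩ hUV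
    rcases eq_or_ne j₁ j₂ with rfl | hne
    · -- same component
      have hAB : A ≠ B := fun h => hUV (by rw [h])
      have hC1 := hC j₁ hj₁
      by_cases hcond : d ≤ n - j₁ * d - k
      · rw [if_pos hcond] at hC1
        have hrank := hC1.1.1 A hA B hB hAB
        have hfin := finrank_inf_same (F := F) (hbound j₁ hj₁) A B
        have hrk : (A - B).rank ≤ k :=
          le_trans (Matrix.rank_le_card_height _) (by simp)
        omega
      · rw [if_neg hcond] at hC1
        obtain ⟨M, hM⟩ := hC1
        rw [hM] at hA hB
        exact absurd (hA.trans hB.symm) hAB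
    · -- different components
      rcases lt_or_gt_of_ne hne with hlt | hlt
      · have hll : j₁ * d + d ≤ j₂ * d := by
          calc j₁ * d + d = (j₁ + 1) * d := by ring
            _ ≤ j₂ * d := Nat.mul_le_mul_right d hlt
        have := finrank_inf_le_of_lt (hbound j₁ hj₁) (hbound j₂ hj₂) hll hdk A B
        omega
      · have hll : j₂ * d + d ≤ j₁ * d := by
          calc j₂ * d + d = (j₂ + 1) * d := by ring
            _ ≤ j₁ * d := Nat.mul_le_mul_right d hlt
        have h := finrank_inf_le_of_lt (hbound j₂ hj₂) (hbound j₁ hj₁) hll hdk B A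
        rw [inf_comm] at h
        omega
  · -- existence of a pair at distance exactly d
    have h0 : (0 : ℕ) ≤ (n - k) / d := Nat.zero_le _
    have hC0 := hC 0 h0
    have hcond : d ≤ n - 0 * d - k := by omega
    rw [if_pos hcond] at hC0
    obtain ⟨⟨_, A, hA, B, hB, hAB, hrank⟩, _⟩ := hC0
    have hl : 0 * d + k ≤ n := by omega
    have hfin := finrank_inf_same (F := F) hl A B
    rw [hrank] at hfin
    refine ⟨rowSpace F (paddedLift F k n (0 * d) A), ⟨0, h0, A, hA, rfl⟩,
      rowSpace F (paddedLift F k n (0 * d) B), ⟨0, h0, B, hB, rfl⟩, ?_, ?_⟩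
    · intro h
      have heq : rowSpace F (paddedLift F k n (0 * d) A)
          ⊓ rowSpace F (paddedLift F k n (0 * d) B)
          = rowSpace F (paddedLift F k n (0 * d) A) := by rw [h, inf_idem]
      rw [heq, finrank_rowSpace_paddedLift hl A] at hfin
      omega
    · omega
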